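/- Let Δ > 0, t₀ ∈ ℝ, and |f| ≤ 1, |φ₁'| ≤ 1/2. Then the tail integral j₁ = ∫_{[x,X]∖[t₀−Δ,t₀+Δ]} iΔ·z₁'(t)·f(t) / ((z₁(t)−z₀)(z₂(t)−z₀)) dt satisfies |j₁| ≤ 4, where z₀ = z₁(t₀), zⱼ(t) = t+iφⱼ(t), using |zⱼ(t)−z₀| ≥ |t−t₀| and |z₁'| ≤ 3/2. -/

import Mathlib

open Set MeasureTheory Filter

lemma aux_Ioi (c Δ : ℝ) (hΔ : 0 < Δ) :
    IntegrableOn (fun t : ℝ => ((t - c) ^ 2)⁻¹) (Set.Ioi (c + Δ)) ∧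
      (∫ t in Set.Ioi (c + Δ), ((t - c) ^ 2)⁻¹) = Δ⁻¹ := by
  have hderiv : ∀ x ∈ Ici (c + Δ), HasDerivAt (fun t : ℝ => -(t - c)⁻¹) (((x - c) ^ 2)⁻¹) x := by
    intro x hx
    have hxc : x - c ≠ 0 := by
      have : Δ ≤ x - c := by simp only [mem_Ici] at hx; linarith
      linarith
    have h1 : HasDerivAt (fun t : ℝ => t - c) 1 x := (hasDerivAt_id x).sub_const c
    have h2 := (h1.inv hxc).neg
    refine h2.congr_deriv ?_
    ring
  have hnonneg : ∀ x ∈ Ioi (c + Δ), 0 ≤ ((x - c) ^ 2)⁻¹ := fun x _ => by positivity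
  have htend : Tendsto (fun t : ℝ => -(t - c)⁻¹) atTop (nhds 0) := by
    have : Tendsto (fun t : ℝ => (t - c)⁻¹) atTop (nhds 0) :=
      tendsto_inv_atTop_zero.comp (tendsto_atTop_add_const_right atTop (-c) tendsto_id)
    simpa using this.neg
  refine ⟨integrableOn_Ioi_deriv_of_nonneg' hderiv hnonneg htend, ?_⟩
  have := integral_Ioi_of_hasDerivAt_of_nonneg' hderiv hnonneg htend
  rw [this]
  simp

lemma aux_Iio (c Δ : ℝ) (hΔ : 0 < Δ) :
    IntegrableOn (fun t : ℝ => ((t - c) ^ 2)⁻¹) (Set.Iio (c - Δ)) ∧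
      (∫ t in Set.Iio (c - Δ), ((t - c) ^ 2)⁻¹) = Δ⁻¹ := by
  obtain ⟨hI, hint⟩ := aux_Ioi (-c) Δ hΔ
  have hkey : (fun x : ℝ => (Ioi (-c + Δ)).indicator (fun t : ℝ => ((t - -c) ^ 2)⁻¹) (-x))
      = (Iio (c - Δ)).indicator (fun t : ℝ => ((t - c) ^ 2)⁻¹) := by
    funext y
    by_cases hy : y < c - Δ
    · rw [indicator_of_mem (by simp [mem_Ioi]; linarith), indicator_of_mem (by simpa)]
      ring_nf
    · rw [indicator_of_notMem (by simp [mem_Ioi]; linarith),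
        indicator_of_notMem (by simpa using hy)]
  constructor
  · have h1 : Integrable ((Ioi (-c + Δ)).indicator (fun t : ℝ => ((t - -c) ^ 2)⁻¹)) :=
      (integrable_indicator_iff measurableSet_Ioi).2 hI
    have h2 := h1.comp_neg
    rw [hkey] at h2
    exact (integrable_indicator_iff measurableSet_Iio).1 h2
  · have h3 : (∫ x in Ioi (-c + Δ), ((-x - c) ^ 2)⁻¹) = ∫ x in Iic (-(-c + Δ)), ((x - c) ^ 2)⁻¹ := by
      exact integral_comp_neg_Ioi (-c + Δ) (fun t : ℝ => ((t - c) ^ 2)⁻¹)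
    have h4 : (∫ x in Ioi (-c + Δ), ((-x - c) ^ 2)⁻¹) = ∫ x in Ioi (-c + Δ), ((x - -c) ^ 2)⁻¹ := by
      apply setIntegral_congr_fun measurableSet_Ioi
      intro y _
      ring_nf
    rw [setIntegral_congr_set Iio_ae_eq_Iic, show c - Δ = -(-c + Δ) by ring, ← h3, h4, hint]

/-- The tail integral `j₁` of the singular part of the kernel is bounded by `4`. -/
theorem stmt_15 (x X t₀ Δ : ℝ) (φ₁ φ₂ φ₁' : ℝ → ℝ) (f : ℝ → ℝ)
    (hΔ : 0 < Δ) (hΔdef : Δ = φ₂ t₀ - φ₁ t₀)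
    (hf : ∀ t, |f t| ≤ 1) (hφ₁' : ∀ t, |φ₁' t| ≤ 1 / 2)
    (hfm : Measurable f) (hm₁ : Measurable φ₁) (hm₂ : Measurable φ₂)
    (hm₁' : Measurable φ₁') :
    ‖∫ t in Set.Icc x X \ Set.Icc (t₀ - Δ) (t₀ + Δ),
        Complex.I * (Δ : ℂ) * (1 + (φ₁' t : ℂ) * Complex.I) * (f t : ℂ) /
          ((((t : ℂ) + (φ₁ t : ℂ) * Complex.I) - ((t₀ : ℂ) + (φ₁ t₀ : ℂ) * Complex.I)) *
           (((t : ℂ) + (φ₂ t : ℂ) * Complex.I) - ((t₀ : ℂ) + (φ₁ t₀ : ℂ) * Complex.I)))‖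
      ≤ 4 := by
  set A := Set.Icc x X \ Set.Icc (t₀ - Δ) (t₀ + Δ) with hA
  set S := Iio (t₀ - Δ) ∪ Ioi (t₀ + Δ) with hS
  set g : ℝ → ℝ := fun t => 3 / 2 * Δ * ((t - t₀) ^ 2)⁻¹ with hg
  have hAS : A ⊆ S := by
    rintro t ⟨-, ht⟩
    simp only [mem_Icc, not_and, not_le] at ht
    rcases le_or_gt (t₀ - Δ) t with h | h
    · exact Or.inr (ht h)
    · exact Or.inl h
  obtain ⟨hIio, hIioval⟩ := aux_Iio t₀ Δ hΔ
  obtain ⟨hIoi, hIoival⟩ := aux_Ioi t₀ Δ hΔ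
  have hS_int : IntegrableOn g S := ((hIio.union hIoi).const_mul (3 / 2 * Δ))
  have hA_meas : MeasurableSet A := measurableSet_Icc.diff measurableSet_Icc
  have hA_int : IntegrableOn g A := hS_int.mono_set hAS
  have hbound : ∀ t ∈ A, ‖Complex.I * (Δ : ℂ) * (1 + (φ₁' t : ℂ) * Complex.I) * (f t : ℂ) /
          ((((t : ℂ) + (φ₁ t : ℂ) * Complex.I) - ((t₀ : ℂ) + (φ₁ t₀ : ℂ) * Complex.I)) *
           (((t : ℂ) + (φ₂ t : ℂ) * Complex.I) - ((t₀ : ℂ) + (φ₁ t₀ : ℂ) * Complex.I)))‖ ≤ g t := by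
    intro t htA
    have htS := hAS htA
    have hdist : Δ ≤ |t - t₀| := by
      rcases htS with h | h
      · rw [abs_of_nonpos (by simp only [mem_Iio] at h; linarith)]
        simp only [mem_Iio] at h; linarith
      · rw [abs_of_nonneg (by simp only [mem_Ioi] at h; linarith)]
        simp only [mem_Ioi] at h; linarith
    have hnum : ‖Complex.I * (Δ : ℂ) * (1 + (φ₁' t : ℂ) * Complex.I) * (f t : ℂ)‖ ≤ 3 / 2 * Δ := by
      rw [norm_mul, norm_mul, norm_mul, Complex.norm_I, one_mul]
      have h1 : ‖(Δ : ℂ)‖ = Δ := by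
        rw [Complex.norm_real, Real.norm_eq_abs, abs_of_pos hΔ]
      have h2 : ‖(1 : ℂ) + (φ₁' t : ℂ) * Complex.I‖ ≤ 3 / 2 := by
        calc ‖(1 : ℂ) + (φ₁' t : ℂ) * Complex.I‖ ≤ ‖(1 : ℂ)‖ + ‖(φ₁' t : ℂ) * Complex.I‖ :=
              norm_add_le _ _
          _ = 1 + |φ₁' t| := by rw [norm_one, norm_mul, Complex.norm_I, mul_one, Complex.norm_real, Real.norm_eq_abs]
          _ ≤ 3 / 2 := by have := hφ₁' t; linarith
      have h3 : ‖((f t : ℝ) : ℂ)‖ ≤ 1 := by rw [Complex.norm_real, Real.norm_eq_abs]; exact hf t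
      calc ‖(Δ : ℂ)‖ * ‖(1 : ℂ) + (φ₁' t : ℂ) * Complex.I‖ * ‖((f t : ℝ) : ℂ)‖
          ≤ Δ * (3 / 2) * 1 := by
            rw [h1]
            exact mul_le_mul (mul_le_mul_of_nonneg_left h2 hΔ.le) h3 (norm_nonneg _)
              (by positivity)
          _ = 3 / 2 * Δ := by ring
    have hden : (t - t₀) ^ 2 ≤
        ‖(((t : ℂ) + (φ₁ t : ℂ) * Complex.I) - ((t₀ : ℂ) + (φ₁ t₀ : ℂ) * Complex.I)) *
           (((t : ℂ) + (φ₂ t : ℂ) * Complex.I) - ((t₀ : ℂ) + (φ₁ t₀ : ℂ) * Complex.I))‖ := by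
      rw [norm_mul]
      have hre1 : |t - t₀| ≤ ‖((t : ℂ) + (φ₁ t : ℂ) * Complex.I) - ((t₀ : ℂ) + (φ₁ t₀ : ℂ) * Complex.I)‖ := by
        have := Complex.abs_re_le_norm (((t : ℂ) + (φ₁ t : ℂ) * Complex.I) - ((t₀ : ℂ) + (φ₁ t₀ : ℂ) * Complex.I))
        simpa using this
      have hre2 : |t - t₀| ≤ ‖((t : ℂ) + (φ₂ t : ℂ) * Complex.I) - ((t₀ : ℂ) + (φ₁ t₀ : ℂ) * Complex.I)‖ := by
        have := Complex.abs_re_le_norm (((t : ℂ) + (φ₂ t : ℂ) * Complex.I) - ((t₀ : ℂ) + (φ₁ t₀ : ℂ) * Complex.I))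
        simpa using this
      calc (t - t₀) ^ 2 = |t - t₀| * |t - t₀| := by rw [← abs_mul, abs_mul_self]; ring
        _ ≤ _ := mul_le_mul hre1 hre2 (abs_nonneg _) (norm_nonneg _)
    have htne : (t - t₀) ^ 2 > 0 := by
      have h0 : t - t₀ ≠ 0 := by
        intro h
        rw [h, abs_zero] at hdist
        linarith
      positivity
    rw [norm_div]
    calc _ ≤ (3 / 2 * Δ) / ((t - t₀) ^ 2) := by
          apply div_le_div₀ (by positivity) hnum htne hden
      _ = g t := by rw [hg]; field_simp
  calc ‖∫ t in A, Complex.I * (Δ : ℂ) * (1 + (φ₁' t : ℂ) * Complex.I) * (f t : ℂ) /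
          ((((t : ℂ) + (φ₁ t : ℂ) * Complex.I) - ((t₀ : ℂ) + (φ₁ t₀ : ℂ) * Complex.I)) *
           (((t : ℂ) + (φ₂ t : ℂ) * Complex.I) - ((t₀ : ℂ) + (φ₁ t₀ : ℂ) * Complex.I)))‖
      ≤ ∫ t in A, g t :=
        norm_integral_le_of_norm_le hA_int ((ae_restrict_iff' hA_meas).2 (ae_of_all _ hbound))
    _ ≤ ∫ t in S, g t := by
        apply setIntegral_mono_set hS_int (ae_of_all _ fun t => ?_) (HasSubset.Subset.eventuallyLE hAS)
        have : (0:ℝ) ≤ ((t - t₀) ^ 2)⁻¹ := by positivity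
        rw [hg]; positivity
    _ = (∫ t in Iio (t₀ - Δ), g t) + ∫ t in Ioi (t₀ + Δ), g t := by
        apply setIntegral_union _ measurableSet_Ioi (hIio.const_mul _) (hIoi.const_mul _)
        exact Set.disjoint_left.2 fun a ha ha' => by
          simp only [mem_Iio] at ha; simp only [mem_Ioi] at ha'; linarith
    _ = 3 / 2 * Δ * Δ⁻¹ + 3 / 2 * Δ * Δ⁻¹ := by
        rw [hg]
        simp only [MeasureTheory.integral_const_mul]
        rw [hIioval, hIoival]
    _ = 3 := by field_simp; ring
    _ ≤ 4 := by norm_num
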